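/- For the Tribonacci sequence and any k ≥ 5: 8·∑_{j=0}^{k} (−1)^j·T(j)² = (−1)^k·(7·T(k)² − 5·T(k−1)² + 8·T(k−2)² − 2·T(k−3)² + T(k−4)² − T(k−5)²) − 2. -/

import Mathlib

open Finset

theorem stmt11 (T : ℕ → ℤ) (h0 : T 0 = 0) (h1 : T 1 = 1) (h2 : T 2 = 1) (hT : ∀ n, 3 ≤ n → T n = T (n-1) + T (n-2) + T (n-3)) :
    ∀ k, 5 ≤ k → 8*∑ j ∈ range (k+1), (-1:ℤ)^j * (T j)^2 = (-1)^k * (7*(T k)^2 - 5*(T (k-1))^2 + 8*(T (k-2))^2 - 2*(T (k-3))^2 + (T (k-4))^2 - (T (k-5))^2) - 2 := by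
  intro k hk
  induction k, hk using Nat.le_induction with
  | base =>
    have h3 := hT 3 (by norm_num)
    have h4 := hT 4 (by norm_num)
    have h5 := hT 5 (by norm_num)
    norm_num at h3 h4 h5
    simp [Finset.sum_range_succ, h0, h1, h2, h3, h4, h5]
  | succ k hk ih =>
    have e2 := hT k (by omega)
    have e3 := hT (k-1) (by omega)
    have e4 := hT (k-2) (by omega)
    have i1 : k - 1 - 1 = k - 2 := by omega
    have i2 : k - 1 - 2 = k - 3 := by omega
    have i3 : k - 1 - 3 = k - 4 := by omega
    have i4 : k - 2 - 1 = k - 3 := by omega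
    have i5 : k - 2 - 2 = k - 4 := by omega
    have i6 : k - 2 - 3 = k - 5 := by omega
    rw [i1, i2, i3] at e3
    rw [i4, i5, i6] at e4
    have e1 : T (k+1) = T k + T (k-1) + T (k-2) := by
      have := hT (k+1) (by omega)
      simpa using this
    have j1 : k + 1 - 1 = k := by omega
    have j2 : k + 1 - 2 = k - 1 := by omega
    have j3 : k + 1 - 3 = k - 2 := by omega
    have j4 : k + 1 - 4 = k - 3 := by omega
    have j5 : k + 1 - 5 = k - 4 := by omega
    have hd : T (k-3) = T k - T (k-1) - T (k-2) := by linarith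
    have he : T (k-4) = 2*T (k-1) - T k := by linarith
    have hf : T (k-5) = 2*T (k-2) - T (k-1) := by linarith
    rw [j1, j2, j3, j4, j5, Finset.sum_range_succ, mul_add, ih, e1, hd, he, hf,
      pow_succ]
    ring
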